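/- Let c₁ = 4H₁ − 2E and c₂ = 2(3H₁² − 3H₁E + E²) in a commutative ring where H₁²E = 0, H₁⁵ = 1, H₁E⁴ = −3, E⁵ = −12 (and all degree-5 monomials not of these forms determined by these relations, i.e., H₁²E³ = H₁³E² = H₁⁴E = 0). Then c₁⁵ − 4c₁³c₂ + 3c₁c₂² = 16. -/
import Mathlib

/-- With `c₁ = 4H₁ − 2E` and `c₂ = 2(3H₁² − 3H₁E + E²)` in a
commutative ring with degree map where `H₁²E = 0`, `deg(H₁⁵) = 1`,
`deg(H₁E⁴) = −3`, `deg(E⁵) = −12` (so `H₁²E³ = H₁³E² = H₁⁴E = 0`), one has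
`deg(c₁⁵ − 4c₁³c₂ + 3c₁c₂²) = 16`. -/
theorem stmt_11 {R : Type*} [CommRing R] (H1 E : R) (deg : R →+ ℤ)
    (hrel : H1 ^ 2 * E = 0)
    (d5 : deg (H1 ^ 5) = 1)
    (d14 : deg (H1 * E ^ 4) = -3)
    (dE5 : deg (E ^ 5) = -12) :
    deg ((4*H1 - 2*E) ^ 5 - 4 * (4*H1 - 2*E) ^ 3 * (2*(3*H1^2 - 3*H1*E + E^2))
        + 3 * (4*H1 - 2*E) * (2*(3*H1^2 - 3*H1*E + E^2)) ^ 2) = 16 := by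
  have key : (4*H1 - 2*E) ^ 5 - 4 * (4*H1 - 2*E) ^ 3 * (2*(3*H1^2 - 3*H1*E + E^2))
        + 3 * (4*H1 - 2*E) * (2*(3*H1^2 - 3*H1*E + E^2)) ^ 2
      = (-80 : ℤ) • (H1 ^ 5) + (-64 : ℤ) • (H1 * E ^ 4) + (8 : ℤ) • (E ^ 5) := by
    simp only [zsmul_eq_mul]
    push_cast
    linear_combination (200*H1^2 - 256*H1*E + 184*E^2) * hrel
  rw [key]
  simp only [map_add, map_zsmul, d5, d14, dE5]
  norm_num
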